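/- Let H be a reproducing kernel Hilbert space on a set X with reproducing kernel k, and let X_N = {x_1, ..., x_N} ⊆ X and y_1, ..., y_N ∈ ℝ. If a minimizer f* of f ↦ ∑_{i=1}^N (f(x_i) − y_i)² + λ‖f‖_H² over H exists (λ > 0), then f* lies in the span of {k(·, x_1), ..., k(·, x_N)}, i.e., f* = ∑_{j=1}^N α_j k(·, x_j) for some coefficients α_j ∈ ℝ. -/

import Mathlib

/-- Representer theorem: in an RKHS `H` on `X` with kernel `k` and canonical
feature map `K x = k(·, x)` (so that the reproducing property reads
`f(x) = ⟪f, K x⟫`), any minimizer of the regularized least-squares functional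
`f ↦ ∑ i, (f (x i) − y i)² + λ ‖f‖²` lies in the span of `{k(·, x₁), …, k(·, x_N)}`. -/
theorem representer_theorem {X : Type*} {H : Type*} [NormedAddCommGroup H]
    [InnerProductSpace ℝ H] [CompleteSpace H]
    (k : X → X → ℝ) (K : X → H)
    (hk : ∀ x z : X, k x z = (inner ℝ (K x) (K z) : ℝ))
    (N : ℕ) (x : Fin N → X) (y : Fin N → ℝ)
    (lam : ℝ) (hlam : 0 < lam)
    (fstar : H)
    (hmin : ∀ g : H,
      (∑ i, ((inner ℝ fstar (K (x i)) : ℝ) - y i) ^ 2) + lam * ‖fstar‖ ^ 2 ≤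
      (∑ i, ((inner ℝ g (K (x i)) : ℝ) - y i) ^ 2) + lam * ‖g‖ ^ 2) :
    fstar ∈ Submodule.span ℝ (Set.range fun i => K (x i)) := by
  set S : Submodule ℝ H := Submodule.span ℝ (Set.range fun i => K (x i)) with hS
  haveI : FiniteDimensional ℝ S := by
    apply FiniteDimensional.span_of_finite
    exact Set.finite_range _
  haveI : CompleteSpace S := FiniteDimensional.complete ℝ S
  set g : H := (S.orthogonalProjectionOnto fstar : H) with hg
  have hgS : g ∈ S := (S.orthogonalProjectionOnto fstar).2
  have hperp : fstar - g ∈ Sᗮ := by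
    have := S.sub_starProjection_mem_orthogonal fstar
    rwa [Submodule.starProjection_apply] at this
  have hKi : ∀ i, K (x i) ∈ S := fun i =>
    Submodule.subset_span ⟨i, rfl⟩
  have hinner : ∀ i, (inner ℝ fstar (K (x i)) : ℝ) = inner ℝ g (K (x i)) := by
    intro i
    have h0 : (inner ℝ (fstar - g) (K (x i)) : ℝ) = 0 :=
      (Submodule.mem_orthogonal' S _).1 hperp _ (hKi i)
    rw [inner_sub_left] at h0
    linarith
  have hnorm : ‖fstar‖ ^ 2 = ‖g‖ ^ 2 + ‖fstar - g‖ ^ 2 := by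
    have := norm_add_sq_real g (fstar - g)
    have hi : (inner ℝ g (fstar - g) : ℝ) = 0 :=
      (Submodule.mem_orthogonal S (fstar - g)).1 hperp g hgS
    simp [hi] at this
    simpa [add_sub_cancel] using this
  have key := hmin g
  have hsum : (∑ i, ((inner ℝ fstar (K (x i)) : ℝ) - y i) ^ 2)
      = ∑ i, ((inner ℝ g (K (x i)) : ℝ) - y i) ^ 2 := by
    exact Finset.sum_congr rfl fun i _ => by rw [hinner i]
  rw [hsum] at key
  have hle : ‖fstar‖ ^ 2 ≤ ‖g‖ ^ 2 := by
    nlinarith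
  have hz : ‖fstar - g‖ ^ 2 ≤ 0 := by nlinarith
  have : fstar - g = 0 := by
    have := sq_nonneg ‖fstar - g‖
    have h0 : ‖fstar - g‖ ^ 2 = 0 := le_antisymm hz this
    have : ‖fstar - g‖ = 0 := by nlinarith [norm_nonneg (fstar - g)]
    exact norm_eq_zero.1 this
  have : fstar = g := by rwa [sub_eq_zero] at this
  rw [this]; exact hgS
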